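/- arXiv:1804.03205 — 2 statements merged into one kernel-verified Lean document; each statement's English description precedes it below -/
import Mathlib

section
/- Touchard's genetic-sum formula: A_n = Σ_{i_1=0}^{0} Σ_{i_2=0}^{i_1+1} Σ_{i_3=0}^{i_2+1} ⋯ Σ_{i_n=0}^{i_{n-1}+1} a_{i_1} a_{i_2} ⋯ a_{i_n}, where A_n is the Dyck path weight polynomial of length 2n. -/
open MvPolynomial

/-- `true` is an up step `(1,1)`, `false` a down step `(1,-1)`. -/
def pstep (b : Bool) : ℤ := if b then 1 else -1

/-- The height of the path `s` after `k` steps (starting at height `0`). -/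
def ht {N : ℕ} (s : Fin N → Bool) (k : ℕ) : ℤ :=
  ∑ i : Fin N, if (i : ℕ) < k then pstep (s i) else 0

/-- The Dyck paths of length `2n`. -/
def DyckFinset (n : ℕ) : Finset (Fin (2 * n) → Bool) :=
  Finset.univ.filter (fun s => ht s (2 * n) = 0 ∧ ∀ k, k ≤ 2 * n → 0 ≤ ht s k)

/-- The weight polynomial of Dyck paths of length `2n`: a down step ending at
height `m` contributes `a_m = X m`. -/
noncomputable def Apoly (n : ℕ) : MvPolynomial ℕ ℤ :=
  ∑ s ∈ DyckFinset n,
    ∏ i : Fin (2 * n), if s i then 1 else X ((ht s ((i : ℕ) + 1)).toNat)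

/-- The iterated ("genetic") sum
`touch m b = ∑_{i=0}^{b-1} a_i · touch (m-1) (i+2)`, so that `touch n 1` is
`∑_{i_1=0}^{0} ∑_{i_2=0}^{i_1+1} ⋯ ∑_{i_n=0}^{i_{n-1}+1} a_{i_1} a_{i_2} ⋯ a_{i_n}`. -/
noncomputable def touch : ℕ → ℕ → MvPolynomial ℕ ℤ
  | 0, _ => 1
  | (m + 1), b => ∑ i ∈ Finset.range b, X i * touch m (i + 2)

/-- up-start weight walk polynomial: target `e`, current height `h`. -/
noncomputable def WU (e : ℤ) : ℤ → List Bool → MvPolynomial ℕ ℤ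
  | h, [] => if 0 ≤ h ∧ h = e then 1 else 0
  | h, b :: t => if 0 ≤ h then (if b then X h.toNat else 1) * WU e (h + pstep b) t else 0

/-- down-end weight walk polynomial. -/
noncomputable def WD (e : ℤ) : ℤ → List Bool → MvPolynomial ℕ ℤ
  | h, [] => if 0 ≤ h ∧ h = e then 1 else 0
  | h, b :: t => if 0 ≤ h then (if b then 1 else X ((h + pstep b).toNat)) * WD e (h + pstep b) t else 0

noncomputable def Usum (N : ℕ) (h e : ℤ) : MvPolynomial ℕ ℤ :=
  ∑ s : Fin N → Bool, WU e h (List.ofFn s)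

noncomputable def Dsum (N : ℕ) (h e : ℤ) : MvPolynomial ℕ ℤ :=
  ∑ s : Fin N → Bool, WD e h (List.ofFn s)

lemma ofFn_rev {α : Type*} {n : ℕ} (f : Fin n → α) :
    List.ofFn (fun i => f i.rev) = (List.ofFn f).reverse := by
  apply List.ext_getElem
  · simp
  · intro i h1 h2
    simp only [List.length_ofFn] at h1
    simp only [List.getElem_reverse, List.getElem_ofFn]
    congr 1
    ext
    simp only [Fin.val_rev]
    simp only [List.length_ofFn, List.length_reverse]
    omega

lemma WU_concat (e h : ℤ) (x : Bool) (l : List Bool) :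
    WU e h (l ++ [x]) =
      if 0 ≤ e then (if x then X ((e - pstep x).toNat) else 1) * WU (e - pstep x) h l else 0 := by
  induction l generalizing h with
  | nil =>
      simp only [List.nil_append, WU]
      by_cases hhe : h + pstep x = e
      · have h2 : e - pstep x = h := by omega
        rw [h2, hhe]
        split_ifs <;> simp_all
      · split_ifs <;> simp_all <;> omega
  | cons a t ih =>
      simp only [List.cons_append, WU, List.append_eq]
      rw [ih]
      split_ifs <;> ring

lemma WD_rev (e h : ℤ) (l : List Bool) :
    WD e h l = WU h e (l.reverse.map not) := by
  induction l generalizing h with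
  | nil => simp only [WD, WU, List.reverse_nil, List.map_nil]
           split_ifs <;> first | rfl | (exfalso; omega)
  | cons b t ih =>
      simp only [WD, List.reverse_cons, List.map_append, List.map_cons, List.map_nil, WU_concat, ih]
      have hp : h - pstep (!b) = h + pstep b := by cases b <;> simp [pstep] <;> ring
      rw [hp]
      cases b <;> simp [pstep] <;> ring

lemma Usum_succ (N : ℕ) (h e : ℤ) :
    Usum (N + 1) h e =
      if 0 ≤ h then X h.toNat * Usum N (h + 1) e + Usum N (h - 1) e else 0 := by
  rw [Usum,
    ← Fintype.sum_equiv (Fin.consEquiv fun _ : Fin (N + 1) => Bool)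
      (fun p : Bool × (Fin N → Bool) => WU e h (p.1 :: List.ofFn p.2))
      (fun s => WU e h (List.ofFn s))
      (by intro p; simp [Fin.consEquiv, List.ofFn_succ])]
  rw [Fintype.sum_prod_type, Fintype.sum_bool]
  have h1 : h + pstep true = h + 1 := by simp [pstep]
  have h2 : h + pstep false = h - 1 := by simp [pstep]; omega
  by_cases hh : 0 ≤ h
  · rw [if_pos hh, Usum, Usum, Finset.mul_sum]
    congr 1
    · exact Finset.sum_congr rfl fun x _ => by rw [show WU e h (true :: List.ofFn x) = (if 0 ≤ h then (if true then X h.toNat else 1) * WU e (h + pstep true) (List.ofFn x) else 0) from rfl, if_pos hh, if_pos rfl, h1]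
    · exact Finset.sum_congr rfl fun x _ => by rw [show WU e h (false :: List.ofFn x) = (if 0 ≤ h then (if false then X h.toNat else 1) * WU e (h + pstep false) (List.ofFn x) else 0) from rfl, if_pos hh, if_neg (by simp), h2, one_mul]
  · rw [if_neg hh]
    have hz : ∀ (b : Bool) (x : Fin N → Bool), WU e h (b :: List.ofFn x) = 0 := by
      intro b x
      simp [WU, hh]
    simp [hz]

lemma Dsum_eq_Usum (N : ℕ) (h e : ℤ) : Dsum N h e = Usum N e h := by
  have hinv : Function.Involutive (fun s : Fin N → Bool => fun i => !(s i.rev)) := by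
    intro s; funext i; simp [Fin.rev_rev]
  rw [Dsum, Usum]
  apply Fintype.sum_equiv hinv.toPerm
  intro s
  rw [WD_rev, ← ofFn_rev, List.map_ofFn]
  rfl

lemma WU_neg (e h : ℤ) (l : List Bool) (hh : h < 0) : WU e h l = 0 := by
  cases l with
  | nil =>
      simp only [WU]
      rw [if_neg]
      rintro ⟨h1, -⟩; omega
  | cons b t =>
      simp only [WU]
      rw [if_neg (by omega)]

lemma WU_eq_zero_of_lt (e : ℤ) : ∀ (l : List Bool) (h : ℤ), e + l.length < h → WU e h l = 0 := by
  intro l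
  induction l with
  | nil =>
      intro h hlt
      simp only [List.length_nil] at hlt
      simp only [WU]
      rw [if_neg]
      rintro ⟨-, rfl⟩; omega
  | cons b t ih =>
      intro h hlt
      simp only [List.length_cons] at hlt
      simp only [WU]
      rw [ih (h + pstep b) (by cases b <;> simp [pstep] <;> push_cast <;> omega)]
      simp

lemma Usum_neg (N : ℕ) (h e : ℤ) (hh : h < 0) : Usum N h e = 0 := by
  rw [Usum]
  apply Finset.sum_eq_zero
  intro s _
  exact WU_neg e h _ hh

lemma Usum_lt (N : ℕ) (h : ℤ) (hh : (N : ℤ) < h) : Usum N h 0 = 0 := by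
  rw [Usum]
  apply Finset.sum_eq_zero
  intro s _
  apply WU_eq_zero_of_lt
  simp
  omega

lemma Usum_touch : ∀ (N m j : ℕ), N = 2 * m + j → Usum N (j : ℤ) 0 = touch m (j + 1) := by
  intro N
  induction N with
  | zero =>
      intro m j hN
      have hm : m = 0 := by omega
      have hj : j = 0 := by omega
      subst hm; subst hj
      simp [Usum, WU, touch]
  | succ N ih =>
      intro m j hN
      rw [Usum_succ, if_pos (by positivity)]
      have hto : ((j : ℤ)).toNat = j := by simp
      cases j with
      | zero =>
          obtain ⟨m', rfl⟩ : ∃ m', m = m' + 1 := ⟨m - 1, by omega⟩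
          rw [show ((0:ℕ):ℤ) - 1 = -1 by simp, Usum_neg N (-1) 0 (by omega)]
          rw [show ((0:ℕ):ℤ) + 1 = ((1:ℕ):ℤ) by simp]
          rw [ih m' 1 (by omega)]
          simp [touch, Finset.sum_range_one]
      | succ j' =>
          rw [show ((j'+1:ℕ):ℤ) - 1 = ((j':ℕ):ℤ) by push_cast; ring]
          rw [ih m j' (by omega)]
          cases m with
          | zero =>
              rw [Usum_lt N _ (by push_cast; omega)]
              simp [touch]
          | succ m'' =>
              rw [show ((j'+1:ℕ):ℤ) + 1 = ((j'+2:ℕ):ℤ) by push_cast; ring]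
              rw [ih m'' (j' + 2) (by omega)]
              rw [hto]
              have e1 : ∀ b, touch (m'' + 1) (b + 1) = touch (m'' + 1) b + X b * touch m'' (b + 2) := by
                intro b
                rw [touch, touch, Finset.sum_range_succ]
              rw [e1 (j' + 1), add_comm]

lemma ht_zero {N : ℕ} (s : Fin N → Bool) : ht s 0 = 0 := by
  simp [ht]

lemma ht_succ {N : ℕ} (s : Fin (N + 1) → Bool) (k : ℕ) :
    ht s (k + 1) = pstep (s 0) + ht (fun i => s i.succ) k := by
  rw [ht, ht, Fin.sum_univ_succ]
  congr 1
  · simp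

lemma WD_ofFn : ∀ (N : ℕ) (s : Fin N → Bool) (h e : ℤ),
    WD e h (List.ofFn s) =
      if (h + ht s N = e ∧ ∀ k, k ≤ N → 0 ≤ h + ht s k)
      then ∏ i : Fin N, (if s i then 1 else X ((h + ht s ((i : ℕ) + 1)).toNat)) else 0 := by
  intro N
  induction N with
  | zero =>
      intro s h e
      simp only [List.ofFn_zero, WD, ht_zero, add_zero, Finset.univ_eq_empty, Finset.prod_empty]
      have : (h = e ∧ ∀ k, k ≤ 0 → 0 ≤ h + ht s k) ↔ (0 ≤ h ∧ h = e) := by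
        constructor
        · rintro ⟨h1, h2⟩
          exact ⟨by simpa [ht_zero] using h2 0 le_rfl, h1⟩
        · rintro ⟨h1, h2⟩
          refine ⟨h2, fun k hk => ?_⟩
          interval_cases k
          simpa [ht_zero] using h1
      rw [if_congr this rfl rfl]
  | succ N ih =>
      intro s h e
      rw [List.ofFn_succ]
      rw [show WD e h (s 0 :: List.ofFn fun i => s i.succ) =
          (if 0 ≤ h then (if s 0 then 1 else X ((h + pstep (s 0)).toNat)) *
            WD e (h + pstep (s 0)) (List.ofFn fun i => s i.succ) else 0) from rfl]
      rw [ih (fun i => s i.succ) (h + pstep (s 0)) e]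
      have hcond : (h + ht s (N + 1) = e ∧ ∀ k, k ≤ N + 1 → 0 ≤ h + ht s k) ↔
          (0 ≤ h ∧ ((h + pstep (s 0)) + ht (fun i => s i.succ) N = e ∧
            ∀ k, k ≤ N → 0 ≤ (h + pstep (s 0)) + ht (fun i => s i.succ) k)) := by
        constructor
        · rintro ⟨h1, h2⟩
          refine ⟨by simpa [ht_zero] using h2 0 (by omega), ?_, fun k hk => ?_⟩
          · rw [add_assoc, ← ht_succ]; exact h1
          · rw [add_assoc, ← ht_succ]; exact h2 (k + 1) (by omega)
        · rintro ⟨h0, h1, h2⟩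
          constructor
          · rw [ht_succ, ← add_assoc]; exact h1
          · intro k hk
            cases k with
            | zero => simpa [ht_zero] using h0
            | succ k => rw [ht_succ, ← add_assoc]; exact h2 k (by omega)
      rw [Fin.prod_univ_succ]
      have hf0 : (if s 0 then (1 : MvPolynomial ℕ ℤ) else X ((h + ht s ((0 : Fin (N+1)) + 1 : ℕ)).toNat)) =
          (if s 0 then 1 else X ((h + pstep (s 0)).toNat)) := by
        have : ht s ((0 : Fin (N+1)) + 1 : ℕ) = pstep (s 0) := by
          rw [show (((0 : Fin (N+1)) : ℕ) + 1) = 0 + 1 from by simp]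
          rw [ht_succ, ht_zero, add_zero]
        rw [this]
      have hprod : ∀ i : Fin N,
          (if s i.succ then (1 : MvPolynomial ℕ ℤ) else X ((h + ht s ((i.succ : ℕ) + 1)).toNat)) =
          (if (fun i => s i.succ) i then 1 else
            X (((h + pstep (s 0)) + ht (fun i => s i.succ) ((i : ℕ) + 1)).toNat)) := by
        intro i
        have : ht s ((i.succ : ℕ) + 1) = pstep (s 0) + ht (fun i => s i.succ) ((i : ℕ) + 1) := by
          rw [Fin.val_succ, ht_succ]
        rw [this, ← add_assoc]
      by_cases hh : 0 ≤ h
      · rw [if_pos hh]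
        by_cases hc : ((h + pstep (s 0)) + ht (fun i => s i.succ) N = e ∧
            ∀ k, k ≤ N → 0 ≤ (h + pstep (s 0)) + ht (fun i => s i.succ) k)
        · rw [if_pos hc, if_pos (hcond.mpr ⟨hh, hc⟩), hf0]
          congr 1
          exact Finset.prod_congr rfl fun i _ => (hprod i).symm
        · rw [if_neg hc, if_neg (fun hcc => hc (hcond.mp hcc).2), mul_zero]
      · rw [if_neg hh, if_neg (fun hcc => hh (hcond.mp hcc).1)]


/-- Touchard's genetic-sum formula:
`A_n = ∑_{i_1=0}^{0} ∑_{i_2=0}^{i_1+1} ⋯ ∑_{i_n=0}^{i_{n-1}+1} a_{i_1} ⋯ a_{i_n}`. -/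
theorem Apoly_eq_genetic_sum (n : ℕ) : Apoly n = touch n 1 := by
  have h1 : Apoly n = Dsum (2 * n) 0 0 := by
    rw [Apoly, DyckFinset, Finset.sum_filter, Dsum]
    apply Finset.sum_congr rfl
    intro s _
    rw [WD_ofFn]
    simp only [zero_add]
  rw [h1, Dsum_eq_Usum]
  have h2 := Usum_touch (2 * n) n 0 (by omega)
  simpa using h2
end

section
/- Define recursively, for k, n ≥ 0, α_n^{(k)} by α_0^{(k)} = 1, α_n^{(0)} = 0 for n > 0, and α_n^{(k)} = Σ_{j=0}^{n} binom(j+k-1, k-1) m_j α_{n-j}^{(j)} for k ≥ 1 (with binom(j-1,-1) interpreted as the indicator of j=0). Then the sequence ω_n := Σ_{j=0}^{n} Σ_{ℓ=0}^{n-j} m_j α_ℓ^{(j)} α_{n-j-ℓ}^{(j+1)} also satisfies ω_n = Σ_{j=0}^{n} Σ_{i=0}^{j} Σ_{ℓ=0}^{n-j} binom(j,i) m_i m_{j-i} α_ℓ^{(i)} α_{n-j-ℓ}^{(j-i)}. -/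
/-- Let `α n k` play the role of `α_n^{(k)}`, defined recursively by
`α_0^{(k)} = 1`, `α_n^{(0)} = 0` for `n > 0`, and, for `k ≥ 1`,
`α_n^{(k)} = ∑_{j=0}^n C(j+k-1, k-1) m_j α_{n-j}^{(j)}`.
Then `ω_n := ∑_{j=0}^n ∑_{ℓ=0}^{n-j} m_j α_ℓ^{(j)} α_{n-j-ℓ}^{(j+1)}` also satisfies
`ω_n = ∑_{j=0}^n ∑_{i=0}^j ∑_{ℓ=0}^{n-j} C(j,i) m_i m_{j-i} α_ℓ^{(i)} α_{n-j-ℓ}^{(j-i)}`. -/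
theorem omega_two_formulas {R : Type*} [CommRing R] (m : ℕ → R) (hm0 : m 0 = 1)
    (α : ℕ → ℕ → R)
    (hα0 : ∀ k, α 0 k = 1)
    (hα0' : ∀ n, 0 < n → α n 0 = 0)
    (hrec : ∀ n k, 1 ≤ k →
      α n k = ∑ j ∈ Finset.range (n + 1),
        (Nat.choose (j + k - 1) (k - 1) : R) * m j * α (n - j) j) :
    ∀ n, (∑ j ∈ Finset.range (n + 1), ∑ ℓ ∈ Finset.range (n - j + 1),
            m j * α ℓ j * α (n - j - ℓ) (j + 1))
        = ∑ j ∈ Finset.range (n + 1), ∑ i ∈ Finset.range (j + 1),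
            ∑ ℓ ∈ Finset.range (n - j + 1),
              (Nat.choose j i : R) * m i * m (j - i) * α ℓ i * α (n - j - ℓ) (j - i) := by
  intro n
  symm
  -- swap the outer two sums (over j and i)
  rw [Finset.sum_comm' (s' := fun i => Finset.Ico i (n + 1)) (t' := Finset.range (n + 1))
      (f := fun j i => ∑ ℓ ∈ Finset.range (n - j + 1),
        (Nat.choose j i : R) * m i * m (j - i) * α ℓ i * α (n - j - ℓ) (j - i))
      (by intro x y; simp only [Finset.mem_range, Finset.mem_Ico]; omega)]
  refine Finset.sum_congr rfl fun i hi => ?_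
  rw [Finset.mem_range] at hi
  have hin : i ≤ n := by omega
  -- reindex j = i + t
  rw [Finset.sum_Ico_eq_sum_range]
  have h1 : n + 1 - i = n - i + 1 := by omega
  rw [h1]
  -- swap the t and ℓ sums
  rw [Finset.sum_comm' (s' := fun ℓ => Finset.range (n - i - ℓ + 1))
      (t' := Finset.range (n - i + 1))
      (f := fun t ℓ => (Nat.choose (i + t) i : R) * m i * m ((i + t) - i) * α ℓ i *
        α (n - (i + t) - ℓ) ((i + t) - i))
      (by intro x y; simp only [Finset.mem_range]; omega)]
  refine Finset.sum_congr rfl fun ℓ hℓ => ?_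
  rw [Finset.mem_range] at hℓ
  rw [hrec (n - i - ℓ) (i + 1) (by omega), Finset.mul_sum]
  refine Finset.sum_congr rfl fun t ht => ?_
  rw [Finset.mem_range] at ht
  have h2 : i + t - i = t := by omega
  have h3 : n - (i + t) - ℓ = n - i - ℓ - t := by omega
  have h4 : t + (i + 1) - 1 = i + t := by omega
  have h5 : (i + 1) - 1 = i := by omega
  rw [h2, h3, h4, h5]
  ring
end
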